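/- Let J(u,v) for u ∈ ℝ, v ∈ ℝ with 0 < v < 2π be defined by J(u,v) = (2^k·u^{2(n−k)}/v^{k+2})·((v − sin v)/(2v³))^{n−k−1}·sin(v/2)^{k−1}·(sin(v/2) − (v/2)·cos(v/2)), for integers n > k ≥ 2. Then for all t ∈ (0,1] and all 0 < v < 2π, u > 0: J(t·u, t·v) ≥ t^{2(n−k)}·J(u,v). -/

import Mathlib

open Real Set

-- L1: sin s - s cos s ≥ 0 on [0, π]
lemma aux1 {s : ℝ} (h0 : 0 ≤ s) (h1 : s ≤ π) : 0 ≤ Real.sin s - s * Real.cos s := by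
  have hg : ∀ x : ℝ, HasDerivAt (fun y => Real.sin y - y * Real.cos y)
      (x * Real.sin x) x := by
    intro x
    have h := (Real.hasDerivAt_sin x).sub
      (((hasDerivAt_id x).mul (Real.hasDerivAt_cos x)))
    refine h.congr_deriv ?_
    simp [id_eq]
  have hmono : MonotoneOn (fun y => Real.sin y - y * Real.cos y) (Icc 0 π) := by
    apply monotoneOn_of_deriv_nonneg (convex_Icc _ _)
    · exact (Real.continuous_sin.sub (continuous_id.mul Real.continuous_cos)).continuousOn
    · intro x _; exact (hg x).differentiableAt.differentiableWithinAt
    · intro x hx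
      rw [interior_Icc] at hx
      rw [(hg x).deriv]
      exact mul_nonneg hx.1.le (Real.sin_nonneg_of_nonneg_of_le_pi hx.1.le hx.2.le)
  have := hmono (left_mem_Icc.mpr Real.pi_pos.le) ⟨h0, h1⟩ h0
  simpa using this

-- φ' = 2 cos s - 2 + s sin s ≤ 0 on [0, 2π]
lemma aux2 {s : ℝ} (h0 : 0 ≤ s) (h1 : s ≤ 2 * π) :
    2 * Real.cos s - 2 + s * Real.sin s ≤ 0 := by
  rcases le_or_gt s π with hs | hs
  · -- antitone on [0, π], derivative s cos s - sin s ≤ 0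
    have hg : ∀ x : ℝ, HasDerivAt (fun y => 2 * Real.cos y - 2 + y * Real.sin y)
        (x * Real.cos x - Real.sin x) x := by
      intro x
      have h := (((Real.hasDerivAt_cos x).const_mul 2).sub (hasDerivAt_const x 2)).add
        ((hasDerivAt_id x).mul (Real.hasDerivAt_sin x))
      refine h.congr_deriv ?_
      simp [id_eq]; ring
    have hmono : AntitoneOn (fun y => 2 * Real.cos y - 2 + y * Real.sin y) (Icc 0 π) := by
      apply antitoneOn_of_deriv_nonpos (convex_Icc _ _)
      · fun_prop
      · intro x _; exact (hg x).differentiableAt.differentiableWithinAt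
      · intro x hx
        rw [interior_Icc] at hx
        rw [(hg x).deriv]
        have := aux1 hx.1.le hx.2.le
        linarith
    have := hmono (left_mem_Icc.mpr Real.pi_pos.le) ⟨h0, hs⟩ h0
    simpa using this
  · -- on [π, 2π]: cos s ≤ 1 and sin s ≤ 0
    have hsin : Real.sin s ≤ 0 := by
      have : Real.sin (s - π) = -Real.sin s := Real.sin_sub_pi s
      have h2 : 0 ≤ Real.sin (s - π) :=
        Real.sin_nonneg_of_nonneg_of_le_pi (by linarith) (by linarith)
      linarith
    have hcos : Real.cos s ≤ 1 := Real.cos_le_one s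
    nlinarith

-- φ = 3 sin s - 2 s - s cos s ≤ 0 on [0, 2π]
lemma aux3 {s : ℝ} (h0 : 0 ≤ s) (h1 : s ≤ 2 * π) :
    3 * Real.sin s - 2 * s - s * Real.cos s ≤ 0 := by
  have hg : ∀ x : ℝ, HasDerivAt (fun y => 3 * Real.sin y - 2 * y - y * Real.cos y)
      (2 * Real.cos x - 2 + x * Real.sin x) x := by
    intro x
    have h := (((Real.hasDerivAt_sin x).const_mul 3).sub
      ((hasDerivAt_id x).const_mul 2)).sub ((hasDerivAt_id x).mul (Real.hasDerivAt_cos x))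
    refine h.congr_deriv ?_
    simp [id_eq]; ring
  have hmono : AntitoneOn (fun y => 3 * Real.sin y - 2 * y - y * Real.cos y)
      (Icc 0 (2 * π)) := by
    apply antitoneOn_of_deriv_nonpos (convex_Icc _ _)
    · fun_prop
    · intro x _; exact (hg x).differentiableAt.differentiableWithinAt
    · intro x hx
      rw [interior_Icc] at hx
      rw [(hg x).deriv]
      exact aux2 hx.1.le hx.2.le
  have := hmono (left_mem_Icc.mpr (by positivity)) ⟨h0, h1⟩ h0
  simpa using this

-- ψ = s^2 sin s + 3 s cos s - 3 sin s ≤ 0 on [0, π]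
lemma aux4 {s : ℝ} (h0 : 0 ≤ s) (h1 : s ≤ π) :
    s ^ 2 * Real.sin s + 3 * s * Real.cos s - 3 * Real.sin s ≤ 0 := by
  have hg : ∀ x : ℝ, HasDerivAt (fun y => y ^ 2 * Real.sin y + 3 * y * Real.cos y - 3 * Real.sin y)
      (x * (x * Real.cos x - Real.sin x)) x := by
    intro x
    have h := (((hasDerivAt_pow 2 x).mul (Real.hasDerivAt_sin x)).add
      (((hasDerivAt_id x).const_mul 3).mul (Real.hasDerivAt_cos x))).sub
      ((Real.hasDerivAt_sin x).const_mul 3)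
    refine h.congr_deriv ?_
    simp [id_eq]; ring
  have hmono : AntitoneOn (fun y => y ^ 2 * Real.sin y + 3 * y * Real.cos y - 3 * Real.sin y)
      (Icc 0 π) := by
    apply antitoneOn_of_deriv_nonpos (convex_Icc _ _)
    · fun_prop
    · intro x _; exact (hg x).differentiableAt.differentiableWithinAt
    · intro x hx
      rw [interior_Icc] at hx
      rw [(hg x).deriv]
      have := aux1 hx.1.le hx.2.le
      nlinarith [mul_nonneg hx.1.le this]
  have := hmono (left_mem_Icc.mpr Real.pi_pos.le) ⟨h0, h1⟩ h0
  simpa using this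

lemma aux5deriv {x : ℝ} (hx : x ≠ 0) :
    HasDerivAt (fun y => (y - Real.sin y) / y ^ 3)
      (((1 - Real.cos x) * x ^ 3 - (x - Real.sin x) * (3 * x ^ 2)) / (x ^ 3) ^ 2) x := by
  have h := ((hasDerivAt_id x).sub (Real.hasDerivAt_sin x)).div (hasDerivAt_pow 3 x)
    (pow_ne_zero 3 hx)
  refine h.congr_deriv ?_
  simp

lemma aux5 {x y : ℝ} (hx : 0 < x) (hxy : x ≤ y) (hy : y < 2 * π) :
    (y - Real.sin y) / y ^ 3 ≤ (x - Real.sin x) / x ^ 3 := by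
  have hanti : AntitoneOn (fun y => (y - Real.sin y) / y ^ 3) (Ioo 0 (2 * π)) := by
    apply antitoneOn_of_deriv_nonpos (convex_Ioo _ _)
    · apply ContinuousOn.div
      · fun_prop
      · fun_prop
      · intro z hz; exact pow_ne_zero 3 (ne_of_gt hz.1)
    · intro z hz
      rw [interior_Ioo] at hz
      exact (aux5deriv (ne_of_gt hz.1)).differentiableAt.differentiableWithinAt
    · intro z hz
      rw [interior_Ioo] at hz
      rw [(aux5deriv (ne_of_gt hz.1)).deriv]
      apply div_nonpos_of_nonpos_of_nonneg _ (by positivity)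
      have h3 := aux3 hz.1.le hz.2.le
      nlinarith [sq_nonneg z, mul_nonneg (sq_nonneg z) (neg_nonneg.mpr h3)]
  exact hanti ⟨hx, lt_of_le_of_lt hxy hy⟩ ⟨lt_of_lt_of_le hx hxy, hy⟩ hxy

lemma aux6deriv {x : ℝ} (hx : x ≠ 0) :
    HasDerivAt (fun y => (Real.sin y - y * Real.cos y) / y ^ 3)
      ((x * Real.sin x * x ^ 3 - (Real.sin x - x * Real.cos x) * (3 * x ^ 2)) / (x ^ 3) ^ 2) x := by
  have h := ((Real.hasDerivAt_sin x).sub ((hasDerivAt_id x).mul (Real.hasDerivAt_cos x))).div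
    (hasDerivAt_pow 3 x) (pow_ne_zero 3 hx)
  refine h.congr_deriv ?_
  simp

lemma aux6 {x y : ℝ} (hx : 0 < x) (hxy : x ≤ y) (hy : y < π) :
    (Real.sin y - y * Real.cos y) / y ^ 3 ≤ (Real.sin x - x * Real.cos x) / x ^ 3 := by
  have hanti : AntitoneOn (fun y => (Real.sin y - y * Real.cos y) / y ^ 3) (Ioo 0 π) := by
    apply antitoneOn_of_deriv_nonpos (convex_Ioo _ _)
    · apply ContinuousOn.div
      · fun_prop
      · fun_prop
      · intro z hz; exact pow_ne_zero 3 (ne_of_gt hz.1)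
    · intro z hz
      rw [interior_Ioo] at hz
      exact (aux6deriv (ne_of_gt hz.1)).differentiableAt.differentiableWithinAt
    · intro z hz
      rw [interior_Ioo] at hz
      rw [(aux6deriv (ne_of_gt hz.1)).deriv]
      apply div_nonpos_of_nonpos_of_nonneg _ (by positivity)
      have h4 := aux4 hz.1.le hz.2.le
      nlinarith [mul_nonneg (sq_nonneg z) (neg_nonneg.mpr h4)]
  exact hanti ⟨hx, lt_of_le_of_lt hxy hy⟩ ⟨lt_of_lt_of_le hx hxy, hy⟩ hxy

-- concavity: t * sin y ≤ sin (t * y)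
lemma aux7 {t y : ℝ} (ht0 : 0 ≤ t) (ht1 : t ≤ 1) (hy0 : 0 ≤ y) (hy1 : y ≤ π) :
    t * Real.sin y ≤ Real.sin (t * y) := by
  have h := strictConcaveOn_sin_Icc.concaveOn.2 (mem_Icc.mpr ⟨hy0, hy1⟩)
    (mem_Icc.mpr ⟨le_refl (0:ℝ), Real.pi_pos.le⟩) ht0 (by linarith : (0:ℝ) ≤ 1 - t)
    (by ring)
  simpa using h

lemma alg (t u v A B P c : ℝ) (ht : t ≠ 0) (hv : v ≠ 0) (m a : ℕ) :
    t ^ (2*a+2) * (c * u ^ (2*a+2) / v ^ (m+2+2) * A ^ a * B ^ (m+1) * P) =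
    c * (t*u) ^ (2*a+2) / (t*v) ^ (m+2+2) * A ^ a * (t*B) ^ (m+1) * (t^3 * P) := by
  apply mul_left_cancel₀ (pow_ne_zero (m+2+2) (mul_ne_zero ht hv))
  rw [mul_pow, mul_pow, mul_pow]
  field_simp
  ring

set_option maxHeartbeats 1000000 in
theorem stmt_9 (n k : ℕ) (hk : 2 ≤ k) (hkn : k < n)
    (J : ℝ → ℝ → ℝ)
    (hJ : ∀ u v : ℝ, J u v =
      (2 ^ k * u ^ (2 * (n - k)) / v ^ (k + 2)) *
        ((v - Real.sin v) / (2 * v ^ 3)) ^ (n - k - 1) *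
        (Real.sin (v / 2)) ^ (k - 1) *
        (Real.sin (v / 2) - (v / 2) * Real.cos (v / 2))) :
    ∀ t u v : ℝ, 0 < t → t ≤ 1 → 0 < u → 0 < v → v < 2 * Real.pi →
      J (t * u) (t * v) ≥ t ^ (2 * (n - k)) * J u v := by
  obtain ⟨m, rfl⟩ : ∃ m, k = m + 2 := ⟨k - 2, by omega⟩
  obtain ⟨a, rfl⟩ : ∃ a, n = m + a + 3 := ⟨n - m - 3, by omega⟩
  intro t u v ht0 ht1 hu hv hv2
  have e1 : 2 * ((m + a + 3) - (m + 2)) = 2 * a + 2 := by omega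
  have e2 : (m + a + 3) - (m + 2) - 1 = a := by omega
  have e3 : (m + 2) - 1 = m + 1 := by omega
  rw [hJ, hJ, e1, e2, e3, ge_iff_le]
  have hπ : v / 2 < π := by linarith
  have htv : 0 < t * v := by positivity
  have htvv : t * v ≤ v := by nlinarith
  have ht2 : t * v / 2 ≤ v / 2 := by linarith
  have ht2p : 0 < t * v / 2 := by positivity
  have hsv : Real.sin v ≤ v := Real.sin_le hv.le
  have hstv : Real.sin (t * v) ≤ t * v := Real.sin_le htv.le
  have hsin2 : 0 ≤ Real.sin (v / 2) :=
    Real.sin_nonneg_of_nonneg_of_le_pi (by linarith) hπ.le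
  have hsinT : 0 ≤ Real.sin (t * v / 2) :=
    Real.sin_nonneg_of_nonneg_of_le_pi ht2p.le (by linarith)
  have hP : 0 ≤ Real.sin (v / 2) - (v / 2) * Real.cos (v / 2) := aux1 (by linarith) hπ.le
  -- key inequality A
  have hA : (v - Real.sin v) / (2 * v ^ 3) ≤ (t * v - Real.sin (t * v)) / (2 * (t * v) ^ 3) := by
    have h := aux5 htv htvv hv2
    rw [div_le_div_iff₀ (by positivity) (by positivity)] at h ⊢
    nlinarith [h]
  -- key inequality B
  have hB : t * Real.sin (v / 2) ≤ Real.sin (t * v / 2) := by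
    have h := aux7 ht0.le ht1 (by linarith : (0:ℝ) ≤ v / 2) hπ.le
    rwa [← mul_div_assoc] at h
  -- key inequality D
  have hD : t ^ 3 * (Real.sin (v / 2) - (v / 2) * Real.cos (v / 2)) ≤
      Real.sin (t * v / 2) - (t * v / 2) * Real.cos (t * v / 2) := by
    have h := aux6 ht2p ht2 hπ
    rw [div_le_div_iff₀ (by positivity) (by positivity)] at h
    nlinarith [h, pow_pos (show (0:ℝ) < v / 2 by linarith) 3]
  have hA0 : 0 ≤ (v - Real.sin v) / (2 * v ^ 3) := by
    apply div_nonneg (by linarith) (by positivity)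
  have hAt0 : 0 ≤ (t * v - Real.sin (t * v)) / (2 * (t * v) ^ 3) := by
    apply div_nonneg (by linarith) (by positivity)
  calc t ^ (2 * a + 2) *
        ((2 ^ (m + 2) * u ^ (2 * a + 2) / v ^ (m + 2 + 2)) *
          ((v - Real.sin v) / (2 * v ^ 3)) ^ a *
          (Real.sin (v / 2)) ^ (m + 1) *
          (Real.sin (v / 2) - (v / 2) * Real.cos (v / 2)))
      = (2 ^ (m + 2) * (t * u) ^ (2 * a + 2) / (t * v) ^ (m + 2 + 2)) *
          ((v - Real.sin v) / (2 * v ^ 3)) ^ a *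
          (t * Real.sin (v / 2)) ^ (m + 1) *
          (t ^ 3 * (Real.sin (v / 2) - (v / 2) * Real.cos (v / 2))) := by
        exact alg t u v _ _ _ _ ht0.ne' hv.ne' m a
    _ ≤ (2 ^ (m + 2) * (t * u) ^ (2 * a + 2) / (t * v) ^ (m + 2 + 2)) *
          ((t * v - Real.sin (t * v)) / (2 * (t * v) ^ 3)) ^ a *
          (Real.sin (t * v / 2)) ^ (m + 1) *
          (Real.sin (t * v / 2) - (t * v / 2) * Real.cos (t * v / 2)) := by
        gcongr
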